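/- A matrix A ∈ SL₂(ℤ) is conjugate in SL₂(ℤ) to R_{1,0} = [[1,1],[0,1]] if and only if there exist coprime integers s and t such that A = R_{s,t} = [[1 − st, s²], [−t², 1 + st]]. -/

import Mathlib

def R (s t : ℤ) : Matrix.SpecialLinearGroup (Fin 2) ℤ :=
  ⟨!![1 - s * t, s ^ 2; -t ^ 2, 1 + s * t], by
    simp [Matrix.det_fin_two_of]; ring⟩

theorem stmt_11 (A : Matrix.SpecialLinearGroup (Fin 2) ℤ) :
    IsConj (R 1 0) A ↔ ∃ s t : ℤ, IsCoprime s t ∧ A = R s t := by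
  rw [isConj_iff]
  constructor
  · rintro ⟨c, hc⟩
    have hd : (c : Matrix (Fin 2) (Fin 2) ℤ).det = 1 := c.2
    rw [Matrix.det_fin_two] at hd
    refine ⟨c.1 0 0, c.1 1 0, ⟨c.1 1 1, -(c.1 0 1), by linear_combination hd⟩, ?_⟩
    apply Subtype.ext
    rw [← hc]
    show (c : Matrix (Fin 2) (Fin 2) ℤ) * (R 1 0 : Matrix (Fin 2) (Fin 2) ℤ) * (c⁻¹ : Matrix.SpecialLinearGroup (Fin 2) ℤ) = _
    rw [Matrix.SpecialLinearGroup.coe_inv]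
    ext i j
    fin_cases i <;> fin_cases j <;>
      simp [R, Matrix.mul_apply, Fin.sum_univ_succ, Matrix.adjugate_fin_two] <;>
      (first | ring1 | linear_combination hd)
  · rintro ⟨s, t, ⟨u, v, huv⟩, rfl⟩
    refine ⟨⟨!![s, -v; t, u], by simp [Matrix.det_fin_two_of]; linear_combination huv⟩, ?_⟩
    refine mul_inv_eq_iff_eq_mul.mpr ?_
    apply Subtype.ext
    show (_ : Matrix (Fin 2) (Fin 2) ℤ) * _ = (_ : Matrix (Fin 2) (Fin 2) ℤ) * _
    ext i j
    fin_cases i <;> fin_cases j <;>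
      simp [R, Matrix.mul_apply, Fin.sum_univ_succ] <;>
      (first | ring1 | linear_combination s*huv | linear_combination t*huv | linear_combination (-s)*huv | linear_combination (-t)*huv)
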